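/- A commutative ring R is weak von Neumann regular if and only if for every a ∈ R and every nonunit idempotent e ∈ R with a ∈ Re, one has a ∈ Ra². -/

import Mathlib

/-- A commutative ring is weak von Neumann regular (WVNR) if for every pair of
finitely generated ideals `I ⊆ J ⊊ R`, if `J` is generated by an idempotent,
then so is `I`. -/
def IsWVNR (R : Type _) [CommRing R] : Prop :=
  ∀ I J : Ideal R, I.FG → J.FG → I ≤ J → J ≠ ⊤ →
    (∃ e : R, IsIdempotentElem e ∧ J = Ideal.span {e}) →
    ∃ f : R, IsIdempotentElem f ∧ I = Ideal.span {f}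

/-- von Neumann regular: every `x` satisfies `x = x² y` for some `y`. -/
def IsVNRegular (R : Type _) [CommRing R] : Prop :=
  ∀ x : R, ∃ y : R, x = x ^ 2 * y

lemma aux_idem_join {R : Type _} [CommRing R] {e f : R}
    (he : IsIdempotentElem e) (hf : IsIdempotentElem f) :
    IsIdempotentElem (e + f - e * f) ∧
      Ideal.span ({e, f} : Set R) = Ideal.span {e + f - e * f} := by
  have hee : e * e = e := he
  have hff : f * f = f := hf
  constructor
  · show (e + f - e * f) * (e + f - e * f) = e + f - e * f
    linear_combination (1 + f * f - 2 * f) * hee + (1 - e) * hff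
  · have heg : e ∈ Ideal.span ({e + f - e * f} : Set R) :=
      Ideal.mem_span_singleton.mpr ⟨e, by linear_combination (f - 1) * hee⟩
    have hfg : f ∈ Ideal.span ({e + f - e * f} : Set R) :=
      Ideal.mem_span_singleton.mpr ⟨f, by linear_combination (e - 1) * hff⟩
    apply le_antisymm
    · rw [Ideal.span_le]
      rintro x hx
      rcases hx with h | h
      · rw [SetLike.mem_coe, h]; exact heg
      · simp only [Set.mem_singleton_iff] at h
        rw [SetLike.mem_coe, h]; exact hfg
    · rw [Ideal.span_le, Set.singleton_subset_iff, SetLike.mem_coe,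
        Ideal.mem_span_pair]
      exact ⟨1, 1 - e, by ring⟩

lemma aux_fg_idem {R : Type _} [CommRing R] (I : Ideal R) (hI : I.FG)
    (h : ∀ a ∈ I, ∃ x : R, a = a ^ 2 * x) :
    ∃ f : R, IsIdempotentElem f ∧ I = Ideal.span {f} := by
  refine Submodule.fg_induction
    (motive := fun N _ => (∀ a ∈ N, ∃ x : R, a = a ^ 2 * x) →
      ∃ f : R, IsIdempotentElem f ∧ N = Ideal.span {f}) ?_ ?_ I hI h
  · intro a ha
    obtain ⟨x, hx⟩ := ha a (Ideal.subset_span rfl)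
    refine ⟨a * x, ?_, ?_⟩
    · show (a * x) * (a * x) = a * x
      linear_combination x * hx.symm
    · show Ideal.span ({a} : Set R) = Ideal.span {a * x}
      apply le_antisymm
      · rw [Ideal.span_le, Set.singleton_subset_iff, SetLike.mem_coe,
          Ideal.mem_span_singleton]
        exact ⟨a, by linear_combination hx⟩
      · rw [Ideal.span_le, Set.singleton_subset_iff, SetLike.mem_coe,
          Ideal.mem_span_singleton]
        exact ⟨x, by ring⟩
  · intro I₁ I₂ _ _ ih₁ ih₂ hsup
    obtain ⟨f₁, hf₁, hI₁⟩ := ih₁ (fun a ha => hsup a (Submodule.mem_sup_left ha))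
    obtain ⟨f₂, hf₂, hI₂⟩ := ih₂ (fun a ha => hsup a (Submodule.mem_sup_right ha))
    obtain ⟨hg, hspan⟩ := aux_idem_join hf₁ hf₂
    refine ⟨f₁ + f₂ - f₁ * f₂, hg, ?_⟩
    have : Ideal.span ({f₁, f₂} : Set R) =
        Ideal.span {f₁} ⊔ Ideal.span {f₂} := by
      rw [Ideal.span_insert]
    rw [← hspan, this, hI₁, hI₂]

theorem stmt_1 (R : Type _) [CommRing R] [Nontrivial R] :
    IsWVNR R ↔ ∀ a e : R, IsIdempotentElem e → ¬ IsUnit e →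
      a ∈ Ideal.span ({e} : Set R) → ∃ x : R, a = a ^ 2 * x := by
  constructor
  · intro hW a e he hue ha
    obtain ⟨f, hf, hspan⟩ := hW (Ideal.span {a}) (Ideal.span {e})
      ⟨{a}, by simp⟩ ⟨{e}, by simp⟩
      ((Ideal.span_singleton_le_iff_mem _).mpr ha)
      (fun h => hue ((Ideal.span_singleton_eq_top).mp h))
      ⟨e, he, rfl⟩
    have h1 : a ∈ Ideal.span ({f} : Set R) := hspan ▸ Ideal.subset_span rfl
    have h2 : f ∈ Ideal.span ({a} : Set R) := hspan.symm ▸ Ideal.subset_span rfl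
    rw [Ideal.mem_span_singleton] at h1 h2
    obtain ⟨r, hr⟩ := h1
    obtain ⟨s, hs⟩ := h2
    have hff : f * f = f := hf
    refine ⟨s ^ 2 * r, ?_⟩
    calc a = f * r := hr
      _ = f * f * r := by rw [hff]
      _ = (a * s) * (a * s) * r := by rw [hs]
      _ = a ^ 2 * (s ^ 2 * r) := by ring
  · intro h I J hIfg hJfg hIJ hJtop ⟨e, he, hJ⟩
    have hue : ¬ IsUnit e := fun hu =>
      hJtop (hJ.trans (Ideal.span_singleton_eq_top.mpr hu))
    apply aux_fg_idem I hIfg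
    intro a ha
    exact h a e he hue (hJ ▸ hIJ ha)
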